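/- Let Ω₁,…,Ωₙ be diagonal 2×2 real matrices. Then every invertible 2×2 complex matrix X such that Xᴴ Ω_i X is diagonal for all i lies in 𝒢(2) if and only if the vectors z₁ = (ω₁₁,…,ωₙ₁) and z₂ = (ω₁₂,…,ωₙ₂) in ℝⁿ are linearly independent. -/

import Mathlib

open Matrix Complex

/-- The group `𝒢(m)` of invertible matrices of the form `D * P` with `D`
invertible diagonal and `P` a permutation matrix, as a predicate. -/
def inG (m : ℕ) (X : Matrix (Fin m) (Fin m) ℂ) : Prop :=
  ∃ (D : Matrix (Fin m) (Fin m) ℂ) (σ : Equiv.Perm (Fin m)),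
    D.IsDiag ∧ IsUnit D.det ∧ X = D * σ.permMatrix ℂ

lemma isDiag2 (A : Matrix (Fin 2) (Fin 2) ℂ) (h01 : A 0 1 = 0) (h10 : A 1 0 = 0) :
    A.IsDiag := by
  intro i j hij
  fin_cases i <;> fin_cases j <;> simp_all

lemma entry01 (X : Matrix (Fin 2) (Fin 2) ℂ) (d : Fin 2 → ℝ) :
    (Xᴴ * Matrix.diagonal (fun k => (d k : ℂ)) * X) 0 1
      = (starRingEnd ℂ) (X 0 0) * (d 0) * X 0 1
        + (starRingEnd ℂ) (X 1 0) * (d 1) * X 1 1 := by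
  simp [Matrix.mul_apply, Fin.sum_univ_two, Matrix.diagonal_apply,
    Matrix.conjTranspose_apply]

lemma entry10 (X : Matrix (Fin 2) (Fin 2) ℂ) (d : Fin 2 → ℝ) :
    (Xᴴ * Matrix.diagonal (fun k => (d k : ℂ)) * X) 1 0
      = (starRingEnd ℂ) (X 0 1) * (d 0) * X 0 0
        + (starRingEnd ℂ) (X 1 1) * (d 1) * X 1 0 := by
  simp [Matrix.mul_apply, Fin.sum_univ_two, Matrix.diagonal_apply,
    Matrix.conjTranspose_apply]

lemma mulperm_apply (D : Matrix (Fin 2) (Fin 2) ℂ) (σ : Equiv.Perm (Fin 2)) (i j : Fin 2) :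
    (D * σ.permMatrix ℂ) i j = D i (σ.symm j) := by
  rw [PEquiv.mul_toMatrix_toPEquiv]
  rfl

/-- a matrix with two nonzero entries in the same column is not in 𝒢(2) -/
lemma notG_col (X : Matrix (Fin 2) (Fin 2) ℂ) (h0 : X 0 0 ≠ 0) (h1 : X 1 0 ≠ 0) :
    ¬ inG 2 X := by
  rintro ⟨D, σ, hD, -, rfl⟩
  rw [mulperm_apply] at h0 h1
  have e0 : σ.symm 0 = 0 := by
    by_contra h; exact h0 (hD (Ne.symm h))
  have e1 : σ.symm 0 = 1 := by
    by_contra h; exact h1 (hD (Ne.symm h))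
  rw [e0] at e1
  exact absurd e1 (by decide)

/-- a matrix with two nonzero entries in the same row is not in 𝒢(2) -/
lemma notG_row (X : Matrix (Fin 2) (Fin 2) ℂ) (h0 : X 0 0 ≠ 0) (h1 : X 0 1 ≠ 0) :
    ¬ inG 2 X := by
  rintro ⟨D, σ, hD, -, rfl⟩
  rw [mulperm_apply] at h0 h1
  have e0 : σ.symm 0 = 0 := by
    by_contra h; exact h0 (hD (Ne.symm h))
  have e1 : σ.symm 1 = 0 := by
    by_contra h; exact h1 (hD (Ne.symm h))
  have := σ.symm.injective (e0.trans e1.symm)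
  exact absurd this (by decide)

/-- For real diagonal matrices `Ω i = diagonal (ω i)`, every
invertible complex `X` with all `Xᴴ Ω_i X` diagonal lies in `𝒢(2)` iff the
vectors of first and second diagonal entries are linearly independent over ℝ. -/
theorem stmt_3 (n : ℕ) (ω : Fin n → Fin 2 → ℝ) :
    (∀ X : Matrix (Fin 2) (Fin 2) ℂ, IsUnit X.det →
        (∀ i, (Xᴴ * Matrix.diagonal (fun k => (ω i k : ℂ)) * X).IsDiag) →
        inG 2 X) ↔
      LinearIndependent ℝ ![fun i => ω i 0, fun i => ω i 1] := by
  rw [LinearIndependent.pair_iff]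
  constructor
  · -- forward direction
    intro H s t hst
    by_contra hc
    have hpt : ∀ i, s * ω i 0 + t * ω i 1 = 0 := by
      intro i
      have := congrFun hst i
      simpa using this
    have hptC : ∀ i, (s : ℂ) * ω i 0 + (t : ℂ) * ω i 1 = 0 := by
      intro i
      have : ((s * ω i 0 + t * ω i 1 : ℝ) : ℂ) = 0 := by rw [hpt i]; simp
      push_cast at this
      linear_combination this
    by_cases hst' : s = t
    · -- both nonzero; use X = !![1, s; 2, t/2]
      have ht : t ≠ 0 := fun h => hc ⟨hst'.trans h, h⟩
      set X : Matrix (Fin 2) (Fin 2) ℂ := !![1, (s : ℂ); 2, (t : ℂ)/2] with hXdef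
      have hX00 : X 0 0 = 1 := by simp [hXdef]
      have hX01 : X 0 1 = (s : ℂ) := by simp [hXdef]
      have hX10 : X 1 0 = 2 := by simp [hXdef]
      have hX11 : X 1 1 = (t : ℂ)/2 := by simp [hXdef]
      have hdet : IsUnit X.det := by
        rw [Matrix.det_fin_two, hX00, hX01, hX10, hX11, isUnit_iff_ne_zero]
        intro h
        have h2 : (t : ℂ) * (-3/2) = 0 := by
          rw [hst'] at h; linear_combination h
        rcases mul_eq_zero.mp h2 with h3 | h3
        · exact ht (by exact_mod_cast h3)
        · norm_num at h3
      have hdiag : ∀ i, (Xᴴ * Matrix.diagonal (fun k => (ω i k : ℂ)) * X).IsDiag := by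
        intro i
        apply isDiag2
        · rw [entry01, hX00, hX01, hX10, hX11]
          simp only [_root_.map_one, map_ofNat]
          linear_combination hptC i
        · rw [entry10, hX00, hX01, hX10, hX11, Complex.conj_ofReal,
            (by push_cast; ring : ((t : ℂ)/2) = ((t/2 : ℝ) : ℂ)), Complex.conj_ofReal]
          push_cast
          linear_combination hptC i
      refine notG_row X (by rw [hX00]; norm_num) ?_ (H X hdet hdiag)
      rw [hX01]
      exact_mod_cast (hst' ▸ ht : s ≠ 0)
    · -- s ≠ t; use X = !![1, s; 1, t]
      set X : Matrix (Fin 2) (Fin 2) ℂ := !![1, (s : ℂ); 1, (t : ℂ)] with hXdef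
      have hX00 : X 0 0 = 1 := by simp [hXdef]
      have hX01 : X 0 1 = (s : ℂ) := by simp [hXdef]
      have hX10 : X 1 0 = 1 := by simp [hXdef]
      have hX11 : X 1 1 = (t : ℂ) := by simp [hXdef]
      have hdet : IsUnit X.det := by
        rw [Matrix.det_fin_two, hX00, hX01, hX10, hX11, isUnit_iff_ne_zero]
        intro h
        apply hst'
        have : (s : ℂ) = (t : ℂ) := by linear_combination -h
        exact_mod_cast this
      have hdiag : ∀ i, (Xᴴ * Matrix.diagonal (fun k => (ω i k : ℂ)) * X).IsDiag := by
        intro i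
        apply isDiag2
        · rw [entry01, hX00, hX01, hX10, hX11]
          simp only [_root_.map_one]
          linear_combination hptC i
        · rw [entry10, hX00, hX01, hX10, hX11, Complex.conj_ofReal, Complex.conj_ofReal]
          linear_combination hptC i
      exact notG_col X (by rw [hX00]; norm_num) (by rw [hX10]; norm_num) (H X hdet hdiag)
  · -- backward direction
    intro hli X hdet hdiag
    set a : ℂ := (starRingEnd ℂ) (X 0 0) * X 0 1 with ha
    set b : ℂ := (starRingEnd ℂ) (X 1 0) * X 1 1 with hb
    have h0 : ∀ i, (ω i 0 : ℂ) * a + (ω i 1 : ℂ) * b = 0 := by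
      intro i
      have hz : ((Xᴴ * Matrix.diagonal fun k => ((ω i k : ℝ) : ℂ)) * X) 0 1 = 0 :=
        hdiag i (show (0 : Fin 2) ≠ 1 by decide)
      rw [entry01] at hz
      rw [ha, hb]
      linear_combination hz
    have hre : ∀ i, ω i 0 * a.re + ω i 1 * b.re = 0 := by
      intro i
      have := congrArg Complex.re (h0 i)
      simpa [Complex.add_re, Complex.mul_re] using this
    have him : ∀ i, ω i 0 * a.im + ω i 1 * b.im = 0 := by
      intro i
      have := congrArg Complex.im (h0 i)
      simpa [Complex.add_im, Complex.mul_im] using this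
    have hre0 := hli a.re b.re (by
      funext i
      simp only [Pi.add_apply, Pi.smul_apply, smul_eq_mul, Pi.zero_apply]
      linarith [hre i])
    have him0 := hli a.im b.im (by
      funext i
      simp only [Pi.add_apply, Pi.smul_apply, smul_eq_mul, Pi.zero_apply]
      linarith [him i])
    have ha0 : a = 0 := Complex.ext (by simp [hre0.1]) (by simp [him0.1])
    have hb0 : b = 0 := Complex.ext (by simp [hre0.2]) (by simp [him0.2])
    have hdet' : X.det ≠ 0 := hdet.ne_zero
    rw [Matrix.det_fin_two] at hdet'
    have hA : X 0 0 = 0 ∨ X 0 1 = 0 := by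
      rcases mul_eq_zero.mp ha0 with h | h
      · left; exact star_eq_zero.mp h
      · right; exact h
    have hB : X 1 0 = 0 ∨ X 1 1 = 0 := by
      rcases mul_eq_zero.mp hb0 with h | h
      · left; exact star_eq_zero.mp h
      · right; exact h
    rcases hA with hA | hA <;> rcases hB with hB | hB
    · -- X00 = 0 and X10 = 0 : first column zero, det = 0
      exact absurd (by rw [hA, hB]; ring) hdet'
    · -- X00 = 0 and X11 = 0 : antidiagonal
      set σ : Equiv.Perm (Fin 2) := Equiv.swap 0 1 with hσ
      refine ⟨X * σ.permMatrix ℂ, σ, ?_, ?_, ?_⟩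
      · apply isDiag2 <;> rw [mulperm_apply]
        · simpa [hσ] using hA
        · simpa [hσ] using hB
      · rw [Matrix.det_mul]
        refine hdet.mul ?_
        rw [Matrix.det_permutation, isUnit_iff_ne_zero, hσ, Equiv.Perm.sign_swap (by decide)]
        norm_num
      · ext i j
        rw [mulperm_apply, mulperm_apply]
        congr 1
        simp [hσ]
    · -- X01 = 0 and X10 = 0 : diagonal
      refine ⟨X, 1, isDiag2 X hA hB, hdet, ?_⟩
      ext i j
      rw [mulperm_apply]
      rfl
    · -- X01 = 0 and X11 = 0 : second column zero, det = 0
      exact absurd (by rw [hA, hB]; ring) hdet'
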